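/- Let Γ be a finite group acting faithfully on a finite set X, and let k be a positive integer with |Γ| ≤ k!. Then there exists a distinguishing labeling φ : X → {1,…,k}; that is, D_Γ(X) ≤ k. -/

import Mathlib

universe u

open Equiv MulAction in
private lemma key_distinguishing : ∀ (n : ℕ) (X : Type u) [Fintype X], Fintype.card X ≤ n →
    ∀ (k : ℕ), 0 < k → ∀ (G : Subgroup (Equiv.Perm X)), Nat.card G ≤ k.factorial →
    ∃ φ : X → Fin k, ∀ g ∈ G, (∀ x, φ (g x) = φ x) → g = 1 := by
  intro n
  induction n with
  | zero =>
    intro X _ hX k hk G _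
    have : IsEmpty X := Fintype.card_eq_zero_iff.mp (Nat.le_zero.mp hX)
    exact ⟨fun _ => ⟨0, hk⟩, fun g _ _ => Equiv.ext fun y => (this.false y).elim⟩
  | succ n IH =>
    intro X _ hX k hk G hG
    classical
    by_cases hne : Nonempty X
    swap
    · exact ⟨fun _ => ⟨0, hk⟩, fun g _ _ => Equiv.ext fun y => (hne ⟨y⟩).elim⟩
    obtain ⟨x⟩ := hne
    set O : Set X := MulAction.orbit G x with hO
    have hxO : x ∈ O := MulAction.mem_orbit_self x
    have hinv : ∀ g ∈ G, ∀ y : X, y ∈ O ↔ g y ∈ O := by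
      intro g hg y
      constructor
      · intro hy
        exact MulAction.mapsTo_smul_orbit (⟨g, hg⟩ : G) x hy
      · intro hy
        have h2 := MulAction.mapsTo_smul_orbit ((⟨g, hg⟩ : G)⁻¹) x hy
        have h3 : (⟨g, hg⟩ : G)⁻¹ • g y = y := by
          have : (⟨g, hg⟩ : G)⁻¹ • ((⟨g, hg⟩ : G) • y) = y := inv_smul_smul _ _
          exact this
        rw [show ((fun x => (⟨g, hg⟩ : G)⁻¹ • x) (g y)) = ((⟨g, hg⟩ : G)⁻¹ • g y) from rfl, h3] at h2
        exact h2
    by_cases hm : Fintype.card O ≤ k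
    -- Case 1 : the orbit is small, color it injectively and recurse on the complement.
    · obtain ⟨f⟩ : Nonempty (O ↪ Fin k) := by
        apply Function.Embedding.nonempty_of_card_le
        simpa using hm
      set X' := {y : X // y ∉ O} with hX'
      have hiff : ∀ g ∈ G, ∀ y : X, y ∉ O ↔ g y ∉ O := fun g hg y => not_iff_not.mpr (hinv g hg y)
      set ρ : G →* Equiv.Perm X' := MonoidHom.mk'
        (fun g => Equiv.Perm.subtypePerm (g : Equiv.Perm X) (fun y => (hiff g g.2 y).symm))
        (by
          intro g h
          apply Equiv.ext
          intro y
          simp [Equiv.Perm.subtypePerm_apply, Equiv.Perm.mul_apply]) with hρ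
      have hcard' : Fintype.card X' < Fintype.card X :=
        Fintype.card_subtype_lt (x := x) (by simpa using hxO)
      have hcardρ : Nat.card ρ.range ≤ k.factorial :=
        le_trans (Nat.card_le_card_of_surjective _ ρ.rangeRestrict_surjective) hG
      obtain ⟨φ', hφ'⟩ := IH X' (by omega) k hk ρ.range hcardρ
      refine ⟨fun y => if h : y ∈ O then f ⟨y, h⟩ else φ' ⟨y, h⟩, ?_⟩
      intro g hg hpres
      have hfix : ∀ y (hy : y ∈ O), g y = y := by
        intro y hy
        have h2 := hpres y
        simp only [dif_pos hy, dif_pos ((hinv g hg y).mp hy)] at h2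
        exact congrArg Subtype.val (f.injective h2)
      have hρ1 : ρ ⟨g, hg⟩ = 1 := by
        apply hφ' _ ⟨⟨g, hg⟩, rfl⟩
        intro y
        have h2 := hpres y.1
        simp only [dif_neg y.2, dif_neg ((hiff g hg y.1).mp y.2)] at h2
        exact h2
      apply Equiv.ext
      intro y
      by_cases hy : y ∈ O
      · simpa using hfix y hy
      · have := congrArg (fun e => ((e ⟨y, hy⟩ : X') : X)) hρ1
        exact this
    -- Case 2 : the orbit is big; give x a unique color, recurse on stabilizer with k-1 colors.
    · push_neg at hm
      have horbstab : Fintype.card O * Fintype.card (MulAction.stabilizer G x) = Nat.card G := by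
        rw [Nat.card_eq_fintype_card]
        exact MulAction.card_orbit_mul_card_stabilizer_eq_card_group G x
      have hk2 : 2 ≤ k := by
        by_contra hk1
        have hk1' : k = 1 := by omega
        subst hk1'
        have h5 : Fintype.card O ≤ Nat.card G := by
          calc Fintype.card O ≤ Fintype.card O * Fintype.card (MulAction.stabilizer G x) :=
                Nat.le_mul_of_pos_right _ Fintype.card_pos
            _ = Nat.card G := horbstab
        rw [show Nat.factorial 1 = 1 from rfl] at hG
        omega
      set H := MulAction.stabilizer G x with hH
      have hHx : ∀ h : H, ((h : G) : Equiv.Perm X) x = x := fun h => h.2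
      have hiff : ∀ h : H, ∀ y : X, y ≠ x ↔ ((h : G) : Equiv.Perm X) y ≠ x := by
        intro h y
        rw [not_iff_not]
        constructor
        · rintro rfl; exact hHx h
        · intro hy
          exact ((h : G) : Equiv.Perm X).injective (hy.trans (hHx h).symm)
      set X' := {y : X // y ≠ x} with hX'
      set ρ : H →* Equiv.Perm X' := MonoidHom.mk'
        (fun h => Equiv.Perm.subtypePerm (((h : G) : Equiv.Perm X)) (fun y => (hiff h y).symm))
        (by
          intro g h
          apply Equiv.ext
          intro y
          simp [Equiv.Perm.subtypePerm_apply, Equiv.Perm.mul_apply]) with hρ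
      have hcard' : Fintype.card X' < Fintype.card X :=
        Fintype.card_subtype_lt (x := x) (by simp)
      have hcardH : Nat.card H ≤ (k-1).factorial := by
        have hHfin : Nat.card H = Fintype.card H := Nat.card_eq_fintype_card
        have h2 : (k + 1) * Fintype.card H ≤ (k + 1) * (k-1).factorial := by
          calc (k + 1) * Fintype.card H ≤ Fintype.card O * Fintype.card H :=
                Nat.mul_le_mul_right _ (by omega)
            _ = Nat.card G := horbstab
            _ ≤ k.factorial := hG
            _ ≤ (k + 1) * (k-1).factorial := by
                have h3 : k.factorial = k * (k-1).factorial := by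
                  have h4 : k = (k-1) + 1 := by omega
                  rw [h4, Nat.factorial_succ]
                  congr 1
                rw [h3]
                exact Nat.mul_le_mul_right _ (by omega)
        rw [hHfin]
        exact Nat.le_of_mul_le_mul_left h2 (by omega)
      have hcardρ : Nat.card ρ.range ≤ (k-1).factorial :=
        le_trans (Nat.card_le_card_of_surjective _ ρ.rangeRestrict_surjective) hcardH
      obtain ⟨φ', hφ'⟩ := IH X' (by omega) (k-1) (by omega) ρ.range hcardρ
      refine ⟨fun y => if h : y = x then ⟨0, hk⟩ else ⟨(φ' ⟨y, h⟩).1 + 1, by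
        have := (φ' ⟨y, h⟩).2; omega⟩, ?_⟩
      intro g hg hpres
      have hgx : g x = x := by
        by_contra hgx
        have h2 := hpres x
        simp only [dif_pos rfl, dif_neg hgx] at h2
        have := congrArg Fin.val h2
        simp at this
      have hHg : (⟨g, hg⟩ : G) ∈ H := hgx
      have hρ1 : ρ ⟨⟨g, hg⟩, hHg⟩ = 1 := by
        apply hφ' _ ⟨⟨⟨g, hg⟩, hHg⟩, rfl⟩
        rintro ⟨y, hy⟩
        have hy' : g y ≠ x := (hiff ⟨⟨g, hg⟩, hHg⟩ y).mp hy
        have h2 := hpres y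
        simp only [dif_neg hy, dif_neg hy', Fin.mk.injEq] at h2
        have h4 : (φ' ⟨g y, hy'⟩) = φ' ⟨y, hy⟩ := by
          apply Fin.ext
          omega
        calc φ' (ρ ⟨⟨g, hg⟩, hHg⟩ ⟨y, hy⟩) = φ' ⟨g y, hy'⟩ := by congr 1
          _ = φ' ⟨y, hy⟩ := h4
      apply Equiv.ext
      intro y
      by_cases hy : y = x
      · subst hy; simpa using hgx
      · have := congrArg (fun e => ((e ⟨y, hy⟩ : X') : X)) hρ1
        exact this

/-- If a finite group `Γ` acts faithfully on a finite set `X` and `|Γ| ≤ k!`, then there is a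
distinguishing labeling of `X` with `k` labels, i.e. `D_Γ(X) ≤ k`. -/
theorem distinguishing_le_of_card_le_factorial {Γ X : Type*} [Group Γ] [Fintype Γ] [Fintype X]
    [MulAction Γ X] [FaithfulSMul Γ X]
    (k : ℕ) (hk : 0 < k) (h : Fintype.card Γ ≤ Nat.factorial k) :
    ∃ φ : X → Fin k, ∀ γ : Γ, (∀ x : X, φ (γ • x) = φ x) → γ = 1 := by
  classical
  set ρ : Γ →* Equiv.Perm X := MulAction.toPermHom Γ X with hρ
  have hinj : Function.Injective ρ := fun a b hab =>
    MulAction.toPerm_injective (show MulAction.toPerm a = MulAction.toPerm b from hab)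
  have hcard : Nat.card ρ.range ≤ k.factorial := by
    refine le_trans (Nat.card_le_card_of_surjective _ ρ.rangeRestrict_surjective) ?_
    rw [Nat.card_eq_fintype_card]
    exact h
  obtain ⟨φ, hφ⟩ := key_distinguishing (Fintype.card X) X le_rfl k hk ρ.range hcard
  refine ⟨φ, fun γ hγ => ?_⟩
  have h1 : ρ γ = 1 := by
    apply hφ _ ⟨γ, rfl⟩
    intro y
    simpa [hρ, MulAction.toPermHom_apply] using hγ y
  have := hinj (h1.trans (map_one ρ).symm)
  simpa using this
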